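/- arXiv:2311.10540 — 6 statements merged into one kernel-verified Lean document; each statement's English description precedes it below -/
import Mathlib

section
/- Let U be a finite set, and for each e ∈ U let c̲(e) ≤ c̄(e) be integers. For a fixed subset S ⊆ U define the canonical scenario c_S : U → ℤ by c_S(e) = c̄(e) if e ∈ S and c_S(e) = c̲(e) otherwise. Then for every function c : U → ℝ with c̲(e) ≤ c(e) ≤ c̄(e) for all e ∈ U, and for every subset S' ⊆ U, it holds that c(S) − c(S') ≤ c_S(S) − c_S(S'), where c(A) := Σ_{e∈A} c(e). -/
/-- The canonical scenario `c_S` pointwise maximizes the regret `c(S) − c(S')`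
over the interval uncertainty set, simultaneously for all `S'`. -/
theorem canonical_scenario_maximizes_regret {U : Type*} [Fintype U] [DecidableEq U]
    (clo chi : U → ℤ) (hle : ∀ e, clo e ≤ chi e)
    (S : Finset U) (c : U → ℝ)
    (hc : ∀ e, (clo e : ℝ) ≤ c e ∧ c e ≤ (chi e : ℝ))
    (S' : Finset U) :
    (∑ e ∈ S, c e) - (∑ e ∈ S', c e) ≤
      (∑ e ∈ S, ((if e ∈ S then chi e else clo e : ℤ) : ℝ)) -
        (∑ e ∈ S', ((if e ∈ S then chi e else clo e : ℤ) : ℝ)) := by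
  have key : ∀ f : U → ℝ, (∑ e ∈ S, f e) - (∑ e ∈ S', f e)
      = (∑ e ∈ S \ S', f e) - (∑ e ∈ S' \ S, f e) := by
    intro f
    rw [← Finset.sum_inter_add_sum_sdiff S S' f, ← Finset.sum_inter_add_sum_sdiff S' S f,
      Finset.inter_comm S' S]
    ring
  rw [key, key]
  have h1 : (∑ e ∈ S \ S', c e) ≤ ∑ e ∈ S \ S', ((if e ∈ S then chi e else clo e : ℤ) : ℝ) := by
    apply Finset.sum_le_sum
    intro e he
    rw [if_pos (Finset.mem_sdiff.mp he).1]
    exact (hc e).2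
  have h2 : (∑ e ∈ S' \ S, ((if e ∈ S then chi e else clo e : ℤ) : ℝ)) ≤ ∑ e ∈ S' \ S, c e := by
    apply Finset.sum_le_sum
    intro e he
    rw [if_neg (Finset.mem_sdiff.mp he).2]
    exact (hc e).1
  linarith
end

section
/- Let U be a finite set, F ⊆ 𝒫(U) a nonempty finite family of subsets, integers c̲(e) ≤ c̄(e) for all e ∈ U, and let C_I be the set of all c : U → ℝ with c̲(e) ≤ c(e) ≤ c̄(e) for all e. Let t ∈ ℤ. Then min_{S∈F} max_{c∈C_I} ( c(S) − min_{S'∈F} c(S') ) ≤ t holds if and only if there exists S ∈ F such that for all S' ∈ F one has c_S(S) − c_S(S') ≤ t, where c_S(e) = c̄(e) for e ∈ S and c_S(e) = c̲(e) for e ∉ S. -/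
/-- The interval min-max regret decision problem, reformulated via the canonical
cost scenario: `min_{S∈F} max_{c∈C_I} (c(S) − min_{S'∈F} c(S')) ≤ t` iff there is
`S ∈ F` with `c_S(S) − c_S(S') ≤ t` for all `S' ∈ F`. -/
theorem interval_minmax_regret_iff_canonical {U : Type*} [Fintype U] [DecidableEq U]
    (F : Finset (Finset U)) (hF : F.Nonempty)
    (clo chi : U → ℤ) (hle : ∀ e, clo e ≤ chi e) (t : ℤ) :
    (F.image (fun S => sSup {r : ℝ | ∃ c : U → ℝ,
        (∀ e, (clo e : ℝ) ≤ c e ∧ c e ≤ (chi e : ℝ)) ∧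
        r = (∑ e ∈ S, c e) -
          (F.image (fun S' => ∑ e ∈ S', c e)).min' (hF.image _)})).min' (hF.image _)
      ≤ (t : ℝ)
    ↔ ∃ S ∈ F, ∀ S' ∈ F,
        (∑ e ∈ S, ((if e ∈ S then chi e else clo e : ℤ) : ℝ)) -
          (∑ e ∈ S', ((if e ∈ S then chi e else clo e : ℤ) : ℝ)) ≤ (t : ℝ) := by
  classical
  set cS : Finset U → U → ℝ := fun S e => ((if e ∈ S then chi e else clo e : ℤ) : ℝ) with hcS
  -- cS S lies in the interval box
  have hbox : ∀ S, ∀ e, (clo e : ℝ) ≤ cS S e ∧ cS S e ≤ (chi e : ℝ) := by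
    intro S e
    simp only [hcS]
    split_ifs with h
    · exact ⟨by exact_mod_cast hle e, le_refl _⟩
    · exact ⟨le_refl _, by exact_mod_cast hle e⟩
  -- key pointwise bound
  have key : ∀ (c : U → ℝ), (∀ e, (clo e : ℝ) ≤ c e ∧ c e ≤ (chi e : ℝ)) →
      ∀ S S' : Finset U, (∑ e ∈ S, c e) - ∑ e ∈ S', c e
        ≤ (∑ e ∈ S, cS S e) - ∑ e ∈ S', cS S e := by
    intro c hc S S'
    have eS : ∑ e ∈ S, c e = ∑ e ∈ S ∩ S', c e + ∑ e ∈ S \ S', c e :=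
      (Finset.sum_inter_add_sum_sdiff S S' c).symm
    have eS' : ∑ e ∈ S', c e = ∑ e ∈ S' ∩ S, c e + ∑ e ∈ S' \ S, c e :=
      (Finset.sum_inter_add_sum_sdiff S' S c).symm
    have eSc : ∑ e ∈ S, cS S e = ∑ e ∈ S ∩ S', cS S e + ∑ e ∈ S \ S', cS S e :=
      (Finset.sum_inter_add_sum_sdiff S S' (cS S)).symm
    have eS'c : ∑ e ∈ S', cS S e = ∑ e ∈ S' ∩ S, cS S e + ∑ e ∈ S' \ S, cS S e :=
      (Finset.sum_inter_add_sum_sdiff S' S (cS S)).symm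
    have hint : ∑ e ∈ S ∩ S', c e - ∑ e ∈ S' ∩ S, c e
        = ∑ e ∈ S ∩ S', cS S e - ∑ e ∈ S' ∩ S, cS S e := by
      rw [Finset.inter_comm S' S]; ring
    have hA : ∑ e ∈ S \ S', c e ≤ ∑ e ∈ S \ S', cS S e := by
      apply Finset.sum_le_sum
      intro e he
      have : e ∈ S := (Finset.mem_sdiff.mp he).1
      simp only [hcS, if_pos this]
      exact (hc e).2
    have hB : ∑ e ∈ S' \ S, cS S e ≤ ∑ e ∈ S' \ S, c e := by
      apply Finset.sum_le_sum
      intro e he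
      have : e ∉ S := (Finset.mem_sdiff.mp he).2
      simp only [hcS, if_neg this]
      exact (hc e).1
    rw [eS, eS', eSc, eS'c]
    have := hint
    linarith
  -- the regret function and its canonical form
  set f : Finset U → ℝ := fun S => sSup {r : ℝ | ∃ c : U → ℝ,
        (∀ e, (clo e : ℝ) ≤ c e ∧ c e ≤ (chi e : ℝ)) ∧
        r = (∑ e ∈ S, c e) -
          (F.image (fun S' => ∑ e ∈ S', c e)).min' (hF.image _)} with hf
  set g : Finset U → ℝ := fun S =>
      (F.image (fun S' => (∑ e ∈ S, cS S e) - ∑ e ∈ S', cS S e)).max' (hF.image _) with hg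
  -- basic facts about g
  have le_g : ∀ S, ∀ S' ∈ F, (∑ e ∈ S, cS S e) - ∑ e ∈ S', cS S e ≤ g S := by
    intro S S' hS'
    exact Finset.le_max' (F.image fun S'' => (∑ e ∈ S, cS S e) - ∑ e ∈ S'', cS S e) _
      (Finset.mem_image_of_mem _ hS')
  have g_le : ∀ S (x : ℝ), (∀ S' ∈ F, (∑ e ∈ S, cS S e) - ∑ e ∈ S', cS S e ≤ x) →
      g S ≤ x := by
    intro S x hx
    apply Finset.max'_le
    intro y hy
    obtain ⟨S', hS', rfl⟩ := Finset.mem_image.mp hy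
    exact hx S' hS'
  have g_mem : ∀ S, ∃ S' ∈ F, g S = (∑ e ∈ S, cS S e) - ∑ e ∈ S', cS S e := by
    intro S
    obtain ⟨S', hS', hmax⟩ := Finset.mem_image.mp
      (Finset.max'_mem (F.image fun S'' => (∑ e ∈ S, cS S e) - ∑ e ∈ S'', cS S e)
        (hF.image _))
    exact ⟨S', hS', hmax.symm⟩
  have hfg : ∀ S, f S = g S := by
    intro S
    have hub : ∀ r ∈ {r : ℝ | ∃ c : U → ℝ,
        (∀ e, (clo e : ℝ) ≤ c e ∧ c e ≤ (chi e : ℝ)) ∧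
        r = (∑ e ∈ S, c e) -
          (F.image (fun S' => ∑ e ∈ S', c e)).min' (hF.image _)}, r ≤ g S := by
      rintro r ⟨c, hc, rfl⟩
      obtain ⟨S', hS', hmin⟩ := Finset.mem_image.mp
        (Finset.min'_mem (F.image (fun S' => ∑ e ∈ S', c e)) (hF.image _))
      rw [← hmin]
      exact le_trans (key c hc S S') (le_g S S' hS')
    have hmem : g S ∈ {r : ℝ | ∃ c : U → ℝ,
        (∀ e, (clo e : ℝ) ≤ c e ∧ c e ≤ (chi e : ℝ)) ∧
        r = (∑ e ∈ S, c e) -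
          (F.image (fun S' => ∑ e ∈ S', c e)).min' (hF.image _)} := by
      refine ⟨cS S, hbox S, ?_⟩
      apply le_antisymm
      · obtain ⟨S'₁, hS'₁, hmax⟩ := g_mem S
        rw [hmax]
        have : (F.image (fun S' => ∑ e ∈ S', cS S e)).min' (hF.image _)
            ≤ ∑ e ∈ S'₁, cS S e :=
          Finset.min'_le _ _ (Finset.mem_image_of_mem _ hS'₁)
        linarith
      · obtain ⟨S'₀, hS'₀, hmin⟩ := Finset.mem_image.mp
          (Finset.min'_mem (F.image (fun S' => ∑ e ∈ S', cS S e)) (hF.image _))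
        rw [← hmin]
        exact le_g S S'₀ hS'₀
    exact le_antisymm (csSup_le ⟨g S, hmem⟩ hub) (le_csSup ⟨g S, hub⟩ hmem)
  constructor
  · intro h
    obtain ⟨S, hS, hfS⟩ := Finset.mem_image.mp
      (Finset.min'_mem (F.image f) (hF.image _))
    refine ⟨S, hS, fun S' hS' => ?_⟩
    have h1 : g S ≤ (t : ℝ) := by rw [← hfg S, hfS]; exact h
    exact le_trans (le_g S S' hS') h1
  · rintro ⟨S, hS, hall⟩
    have h1 : g S ≤ (t : ℝ) := g_le S _ hall
    calc (F.image f).min' (hF.image _) ≤ f S :=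
          Finset.min'_le _ _ (Finset.mem_image_of_mem _ hS)
      _ = g S := hfg S
      _ ≤ (t : ℝ) := h1
end

section
/- Let f : U → U' be injective, S ⊆ 𝒫(U) and S' ⊆ 𝒫(U') families of subsets with the solution-preserving property {f(S) : S ∈ S} = {T ∩ f(U) : T ∈ S'}, and let B ⊆ U. Then for every B' ⊆ f(B): the set B' intersects every member of S' if and only if f⁻¹(B') intersects every member of S. Moreover |f⁻¹(B')| = |B'|. -/
/-- Blockers contained in the image of the embedded universe transfer along a
solution-preserving reduction, with preserved cardinality. -/
theorem blocker_transfer {U U' : Type*} (f : U → U') (hf : Function.Injective f)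
    (S : Set (Set U)) (S' : Set (Set U'))
    (hssp : {f '' A | A ∈ S} = {T ∩ Set.range f | T ∈ S'})
    (B : Set U) (B' : Set U') (hB' : B' ⊆ f '' B) :
    ((∀ T ∈ S', (B' ∩ T).Nonempty) ↔ (∀ A ∈ S, ((f ⁻¹' B') ∩ A).Nonempty)) ∧
      (f ⁻¹' B').ncard = B'.ncard := by
  have hrange : B' ⊆ Set.range f := hB'.trans (Set.image_subset_range f B)
  have himg : f '' (f ⁻¹' B') = B' := by
    rw [Set.image_preimage_eq_inter_range, Set.inter_eq_left.mpr hrange]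
  constructor
  · constructor
    · intro h A hA
      have : f '' A ∈ {T ∩ Set.range f | T ∈ S'} := by
        rw [← hssp]; exact ⟨A, hA, rfl⟩
      obtain ⟨T, hT, hTA⟩ := this
      obtain ⟨x, hxB, hxT⟩ := h T hT
      have hx : x ∈ f '' A := by rw [← hTA]; exact ⟨hxT, hrange hxB⟩
      obtain ⟨a, haA, rfl⟩ := hx
      exact ⟨a, hxB, haA⟩
    · intro h T hT
      have : T ∩ Set.range f ∈ {f '' A | A ∈ S} := by
        rw [hssp]; exact ⟨T, hT, rfl⟩
      obtain ⟨A, hA, hAT⟩ := this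
      obtain ⟨a, haB, haA⟩ := h A hA
      have : f a ∈ T ∩ Set.range f := by rw [← hAT]; exact ⟨a, haA, rfl⟩
      exact ⟨f a, haB, this.1⟩
  · conv_rhs => rw [← himg]
    rw [Set.ncard_image_of_injective _ hf]
end

section
/- Let U, U' be finite sets, f : U → U' injective, and S ⊆ 𝒫(U), S' ⊆ 𝒫(U') nonempty families with the solution-preserving property {f(S) : S ∈ S} = {T ∩ f(U) : T ∈ S'}. Let h̲, h̄ : U → ℤ with h̲ ≤ h̄ pointwise, and define h̲', h̄' : U' → ℤ by h̲'(f(u)) = h̲(u), h̄'(f(u)) = h̄(u) for u ∈ U, and h̲'(e) = h̄'(e) = 0 for e ∉ f(U). Let H and H' be the corresponding interval uncertainty sets on U and U'. Then min_{S∈S} max_{c∈H} ( c(S) − min_{S''∈S} c(S'') ) = min_{T∈S'} max_{c'∈H'} ( c'(T) − min_{T''∈S'} c'(T'') ). -/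
lemma regret_sum_corr {U U' : Type*} [Fintype U] [DecidableEq U']
    (f : U → U') (hf : Function.Injective f) {c : U → ℝ} {c' : U' → ℝ}
    (hcc : ∀ u, c' (f u) = c u) (h0 : ∀ e, e ∉ Set.range f → c' e = 0)
    {S : Finset U} {T : Finset U'}
    (hPT : T ∩ Finset.univ.image f = S.image f) :
    ∑ e ∈ T, c' e = ∑ u ∈ S, c u := by
  have h1 : ∑ e ∈ T, c' e = ∑ e ∈ T ∩ Finset.univ.image f, c' e := by
    refine (Finset.sum_subset Finset.inter_subset_left ?_).symm
    intro e heT henot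
    apply h0
    intro ⟨u, hu⟩
    exact henot (Finset.mem_inter.mpr ⟨heT, Finset.mem_image.mpr ⟨u, Finset.mem_univ u, hu⟩⟩)
  rw [h1, hPT, Finset.sum_image (fun a _ b _ h => hf h)]
  exact Finset.sum_congr rfl fun u _ => hcc u

lemma regret_img_corr {U U' : Type*} [Fintype U] [DecidableEq U'] [DecidableEq U]
    (f : U → U') (hf : Function.Injective f) {c : U → ℝ} {c' : U' → ℝ}
    (hcc : ∀ u, c' (f u) = c u) (h0 : ∀ e, e ∉ Set.range f → c' e = 0)
    (S1 : Finset (Finset U)) (S2 : Finset (Finset U'))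
    (hssp : S1.image (fun S => S.image f)
          = S2.image (fun T => T ∩ Finset.univ.image f)) :
    S2.image (fun T => ∑ e ∈ T, c' e) = S1.image (fun S => ∑ u ∈ S, c u) := by
  have step1 : S2.image (fun T => ∑ e ∈ T, c' e)
      = S2.image (fun T => ∑ e ∈ T ∩ Finset.univ.image f, c' e) := by
    apply Finset.image_congr
    intro T _
    refine (Finset.sum_subset Finset.inter_subset_left ?_).symm
    intro e heT henot
    apply h0
    intro ⟨u, hu⟩
    exact henot (Finset.mem_inter.mpr ⟨heT, Finset.mem_image.mpr ⟨u, Finset.mem_univ u, hu⟩⟩)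
  rw [step1]
  have step2 : S2.image (fun T => ∑ e ∈ T ∩ Finset.univ.image f, c' e)
      = (S2.image (fun T => T ∩ Finset.univ.image f)).image (fun A => ∑ e ∈ A, c' e) := by
    rw [Finset.image_image]; rfl
  rw [step2, ← hssp, Finset.image_image]
  apply Finset.image_congr
  intro S _
  simp only [Function.comp]
  rw [Finset.sum_image (fun a _ b _ h => hf h)]
  exact Finset.sum_congr rfl fun u _ => hcc u

/-- Regret invariance: a solution-preserving embedding (costs extended by zeros
outside the image) leaves the interval min-max regret value unchanged. -/
theorem regret_invariance {U U' : Type*} [Fintype U] [Fintype U']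
    [DecidableEq U] [DecidableEq U']
    (f : U → U') (hf : Function.Injective f)
    (S1 : Finset (Finset U)) (S2 : Finset (Finset U'))
    (hS1 : S1.Nonempty) (hS2 : S2.Nonempty)
    (hssp : S1.image (fun S => S.image f)
          = S2.image (fun T => T ∩ Finset.univ.image f))
    (hlo hhi : U → ℤ) (hle : ∀ e, hlo e ≤ hhi e)
    (hlo' hhi' : U' → ℤ)
    (hlo'f : ∀ u, hlo' (f u) = hlo u) (hhi'f : ∀ u, hhi' (f u) = hhi u)
    (hout : ∀ e, e ∉ Set.range f → hlo' e = 0 ∧ hhi' e = 0) :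
    (S1.image (fun S => sSup {r : ℝ | ∃ c : U → ℝ,
        (∀ e, (hlo e : ℝ) ≤ c e ∧ c e ≤ (hhi e : ℝ)) ∧
        r = (∑ e ∈ S, c e) -
          (S1.image (fun S'' => ∑ e ∈ S'', c e)).min' (hS1.image _)})).min' (hS1.image _)
    = (S2.image (fun T => sSup {r : ℝ | ∃ c : U' → ℝ,
        (∀ e, (hlo' e : ℝ) ≤ c e ∧ c e ≤ (hhi' e : ℝ)) ∧
        r = (∑ e ∈ T, c e) -
          (S2.image (fun T'' => ∑ e ∈ T'', c e)).min' (hS2.image _)})).min' (hS2.image _) := by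
  have minEq : ∀ (s t : Finset ℝ) (hs : s.Nonempty) (ht : t.Nonempty),
      s = t → s.min' hs = t.min' ht := by
    rintro s t hs ht rfl; rfl
  -- the key: regret value sets coincide for corresponding S, T
  have setEq : ∀ (S : Finset U) (T : Finset U'),
      T ∩ Finset.univ.image f = S.image f →
      {r : ℝ | ∃ c : U → ℝ,
        (∀ e, (hlo e : ℝ) ≤ c e ∧ c e ≤ (hhi e : ℝ)) ∧
        r = (∑ e ∈ S, c e) -
          (S1.image (fun S'' => ∑ e ∈ S'', c e)).min' (hS1.image _)}
      = {r : ℝ | ∃ c : U' → ℝ,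
        (∀ e, (hlo' e : ℝ) ≤ c e ∧ c e ≤ (hhi' e : ℝ)) ∧
        r = (∑ e ∈ T, c e) -
          (S2.image (fun T'' => ∑ e ∈ T'', c e)).min' (hS2.image _)} := by
    intro S T hPT
    ext r
    constructor
    · rintro ⟨c, hc, rfl⟩
      refine ⟨Function.extend f c 0, ?_, ?_⟩
      · intro e
        by_cases he : e ∈ Set.range f
        · obtain ⟨u, rfl⟩ := he
          rw [hf.extend_apply, hlo'f, hhi'f]
          exact hc u
        · have hne : ¬ ∃ u, f u = e := fun ⟨u, hu⟩ => he ⟨u, hu⟩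
          rw [Function.extend_apply' _ _ _ hne]
          obtain ⟨h1, h2⟩ := hout e he
          simp [h1, h2]
      · have hcc : ∀ u, Function.extend f c 0 (f u) = c u := fun u => hf.extend_apply _ _ _
        have h0 : ∀ e, e ∉ Set.range f → Function.extend f c 0 e = 0 := by
          intro e he
          exact Function.extend_apply' _ _ _ (fun ⟨u, hu⟩ => he ⟨u, hu⟩)
        rw [regret_sum_corr f hf hcc h0 hPT]
        congr 1
        exact minEq _ _ _ _ (regret_img_corr f hf hcc h0 S1 S2 hssp).symm
    · rintro ⟨c', hc', rfl⟩
      have h0 : ∀ e, e ∉ Set.range f → c' e = 0 := by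
        intro e he
        obtain ⟨h1, h2⟩ := hout e he
        have := hc' e
        rw [h1, h2] at this
        push_cast at this
        linarith [this.1, this.2]
      refine ⟨fun u => c' (f u), ?_, ?_⟩
      · intro u
        rw [← hlo'f u, ← hhi'f u]
        exact hc' (f u)
      · rw [regret_sum_corr f hf (fun u => rfl) h0 hPT]
        congr 1
        exact minEq _ _ _ _ (regret_img_corr f hf (fun u => rfl) h0 S1 S2 hssp)
  apply minEq
  apply Finset.ext
  intro x
  simp only [Finset.mem_image]
  constructor
  · rintro ⟨S, hS, rfl⟩
    have : S.image f ∈ S2.image (fun T => T ∩ Finset.univ.image f) := by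
      rw [← hssp]; exact Finset.mem_image.mpr ⟨S, hS, rfl⟩
    obtain ⟨T, hT, hPT⟩ := Finset.mem_image.mp this
    exact ⟨T, hT, (congrArg sSup (setEq S T hPT)).symm⟩
  · rintro ⟨T, hT, rfl⟩
    have : T ∩ Finset.univ.image f ∈ S1.image (fun S => S.image f) := by
      rw [hssp]; exact Finset.mem_image.mpr ⟨T, hT, rfl⟩
    obtain ⟨S, hS, hPS⟩ := Finset.mem_image.mp this
    exact ⟨S, hS, congrArg sSup (setEq S T hPS.symm)⟩
end

section
/- Let a₁, …, aₙ be natural numbers with total sum A := Σᵢ aᵢ, and let M ≤ A be a natural number. Define b := M + 1 and b' := A + 1 − M. Then there exists a subset S ⊆ {1, …, n} with Σ_{i∈S} aᵢ = M if and only if there exists a subset T of the multiset {a₁, …, aₙ, b, b'} containing b' (and not b) such that the sum of T equals the sum of its complement (both equal to A + 1). -/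
/-- Correctness of the Subset Sum → Partition reduction: with `b = M+1` and
`b' = A+1−M` added to the numbers `a₁,…,aₙ` (encoded by `Sum.inr false` and
`Sum.inr true` respectively), `M` is attainable as a subset sum iff there is a
partition part containing `b'` but not `b` whose sum equals the sum of its complement. -/
theorem subset_sum_iff_partition (n : ℕ) (a : Fin n → ℕ) (M : ℕ)
    (hM : M ≤ ∑ i, a i) :
    (∃ S : Finset (Fin n), ∑ i ∈ S, a i = M) ↔
      (∃ T : Finset (Fin n ⊕ Bool),
        Sum.inr true ∈ T ∧ Sum.inr false ∉ T ∧
        (∑ i ∈ T, Sum.elim a (fun b => if b then (∑ i, a i) + 1 - M else M + 1) i)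
          = ∑ i ∈ Tᶜ, Sum.elim a (fun b => if b then (∑ i, a i) + 1 - M else M + 1) i) := by
  set A := ∑ i, a i with hA
  set w : Fin n ⊕ Bool → ℕ :=
    Sum.elim a (fun b => if b then A + 1 - M else M + 1) with hw
  have htot : ∑ i : Fin n ⊕ Bool, w i = 2 * A + 2 := by
    rw [Fintype.sum_sum_type]
    simp only [hw, Sum.elim_inl, Sum.elim_inr, Fintype.sum_bool, ← hA]
    norm_num
    omega
  have keysum : ∀ S : Finset (Fin n),
      ∑ x ∈ S.image Sum.inl ∪ {Sum.inr true}, w x = (∑ i ∈ S, a i) + (A + 1 - M) := by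
    intro S
    rw [Finset.sum_union (by simp), Finset.sum_image (fun x _ y _ h => Sum.inl.inj h)]
    simp [hw]
  constructor
  · rintro ⟨S, hS⟩
    refine ⟨S.image Sum.inl ∪ {Sum.inr true}, by simp, by simp, ?_⟩
    have h1 : ∑ x ∈ S.image Sum.inl ∪ {Sum.inr true}, w x = A + 1 := by
      rw [keysum, hS]; omega
    have h2 := Finset.sum_compl_add_sum (S.image Sum.inl ∪ {Sum.inr true}) w
    rw [htot] at h2
    omega
  · rintro ⟨T, ht, hf, hsum⟩
    have h2 := Finset.sum_compl_add_sum T w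
    rw [htot] at h2
    have hT : ∑ x ∈ T, w x = A + 1 := by omega
    set S : Finset (Fin n) := T.preimage Sum.inl (Sum.inl_injective.injOn)
      with hS
    have hTeq : T = S.image Sum.inl ∪ {Sum.inr true} := by
      ext x
      rcases x with i | b
      · simp [hS]
      · rcases b with _ | _ <;> simp [ht, hf]
    have hle : ∑ i ∈ S, a i ≤ A := by
      rw [hA]
      exact Finset.sum_le_sum_of_subset (Finset.subset_univ S)
    rw [hTeq, keysum] at hT
    exact ⟨S, by omega⟩
end

section
/- Let G = (V, E) be a finite simple graph and k ≤ |V| a natural number. Set J := V (facilities), I := E (clients), open facility costs f(v) = 1 for all v, and service costs c(e, v) = 0 if v ∈ e and c(e, v) = |V| + 1 otherwise. Then a nonempty set J' ⊆ V satisfies Σ_{v∈J'} f(v) + Σ_{e∈E} min_{v∈J'} c(e, v) ≤ k if and only if J' is a vertex cover of G with |J'| ≤ k. -/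
/-- Correctness of the Vertex Cover → Uncapacitated Facility Location reduction:
with unit opening costs and service cost `0` for incident edges and `|V| + 1`
otherwise, a nonempty facility set has total cost `≤ k` iff it is a vertex cover
of size `≤ k` (for `k ≤ |V|`). -/
theorem vc_to_ufl_correct {V : Type*} [Fintype V] [DecidableEq V]
    (G : SimpleGraph V) [DecidableRel G.Adj]
    (k : ℕ) (hk : k ≤ Fintype.card V)
    (J' : Finset V) (hJ : J'.Nonempty) :
    ((∑ v ∈ J', 1) +
        ∑ e ∈ G.edgeFinset,
          (J'.image (fun v => if v ∈ e then (0 : ℕ) else Fintype.card V + 1)).min'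
            (hJ.image _) ≤ k)
      ↔ ((∀ a b, G.Adj a b → a ∈ J' ∨ b ∈ J') ∧ J'.card ≤ k) := by
  classical
  constructor
  · intro h
    have hcard : J'.card ≤ k := by
      calc J'.card = ∑ v ∈ J', 1 := by simp
        _ ≤ _ := le_trans (Nat.le_add_right _ _) h
    refine ⟨?_, hcard⟩
    intro a b hab
    by_contra hc
    push_neg at hc
    have he : s(a,b) ∈ G.edgeFinset := by simpa using hab
    have hterm : (J'.image (fun v => if v ∈ (s(a,b) : Sym2 V) then (0:ℕ)
        else Fintype.card V + 1)).min' (hJ.image _) ≤ k := by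
      refine le_trans ?_ h
      refine le_trans ?_ (Nat.le_add_left _ _)
      exact Finset.single_le_sum
        (f := fun e => (J'.image (fun v => if v ∈ e then (0:ℕ)
          else Fintype.card V + 1)).min' (hJ.image _))
        (fun _ _ => Nat.zero_le _) he
    have hall : ∀ x ∈ J'.image (fun v => if v ∈ (s(a,b) : Sym2 V) then (0:ℕ)
        else Fintype.card V + 1), x = Fintype.card V + 1 := by
      intro x hx
      simp only [Finset.mem_image] at hx
      obtain ⟨v, hv, rfl⟩ := hx
      have hv' : v ∉ (s(a,b) : Sym2 V) := by
        simp only [Sym2.mem_iff]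
        rintro (rfl | rfl)
        · exact hc.1 hv
        · exact hc.2 hv
      simp [hv']
    have hmem := Finset.min'_mem _ (hJ.image (fun v => if v ∈ (s(a,b) : Sym2 V) then (0:ℕ)
        else Fintype.card V + 1))
    have heq := hall _ hmem
    omega
  · rintro ⟨hcov, hcard⟩
    have hsum0 : ∑ e ∈ G.edgeFinset,
        (J'.image (fun v => if v ∈ e then (0:ℕ) else Fintype.card V + 1)).min'
          (hJ.image _) = 0 := by
      refine Finset.sum_eq_zero ?_
      intro e he
      rw [SimpleGraph.mem_edgeFinset] at he
      induction e using Sym2.ind with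
      | _ a b =>
        have hab : G.Adj a b := he
        refine Nat.le_antisymm ?_ (Nat.zero_le _)
        rcases hcov a b hab with hv | hv
        · exact Finset.min'_le _ _ (Finset.mem_image.2 ⟨a, hv, by simp⟩)
        · exact Finset.min'_le _ _ (Finset.mem_image.2 ⟨b, hv, by simp⟩)
    rw [hsum0]
    simpa using hcard
end
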